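/- Under the coordinate change (α, β) ↦ (A, B) = (−log(αβ), √3 · log(α/β)) on ℝ₊², the map ST(α, β) (where S(α,β) = (β/(α²+β²), α/(α²+β²)) and T(α,β) = (α/(1+β²), αβ/(1+β²))) becomes the linear map (A, B) ↦ (−A/2 + (√3/2)B, −(√3/2)A − B/2), a rotation by −2π/3 about the origin. -/

import Mathlib

noncomputable def Ssys : ℝ × ℝ → ℝ × ℝ := fun p => (p.2/(p.1^2+p.2^2), p.1/(p.1^2+p.2^2))

noncomputable def Tsys : ℝ × ℝ → ℝ × ℝ := fun p => (p.1/(1+p.2^2), p.1*p.2/(1+p.2^2))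

theorem stmt17 (α β : ℝ) (hα : α > 0) (hβ : β > 0) :
    let A := -Real.log (α*β)
    let B := Real.sqrt 3 * Real.log (α/β)
    let p := Ssys (Tsys (α, β))
    (-Real.log (p.1*p.2), Real.sqrt 3 * Real.log (p.1/p.2)) =
      (-A/2 + (Real.sqrt 3/2)*B, -(Real.sqrt 3/2)*A - B/2) := by
  intro A B p
  have hβ2 : (1 : ℝ) + β^2 > 0 := by positivity
  have hp : p = (β/α, 1/α) := by
    simp only [p, Ssys, Tsys]
    have h : (α/(1+β^2))^2 + (α*β/(1+β^2))^2 = α^2/(1+β^2) := by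
      field_simp
    rw [h, Prod.mk.injEq]
    constructor <;> (field_simp)
  rw [hp]
  simp only [A, B]
  have h1 : β / α * (1 / α) = β / α^2 := by rw [div_mul_div_comm, mul_one, sq]
  have h2 : β / α / (1 / α) = β := by
    rw [div_div, mul_one_div, div_self hα.ne', div_one]
  rw [h1, h2]
  have h3 : Real.sqrt 3 * Real.sqrt 3 = 3 := Real.mul_self_sqrt (by norm_num)
  rw [Real.log_div hβ.ne' (by positivity), Real.log_pow,
    Real.log_mul hα.ne' hβ.ne', Real.log_div hα.ne' hβ.ne', Prod.mk.injEq]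
  constructor
  · linear_combination ((Real.log β - Real.log α)/2) * h3
  · ring
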